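/- Let A be the HiPPO-LegS matrix defined by A_{nk} = −(2n+1)^{1/2}(2k+1)^{1/2} for n > k, A_{nn} = −(n+1), and A_{nk} = 0 for n < k. Then A = −(1/2)I − S − p p*, where p_n = (n + 1/2)^{1/2} and S is the real skew-symmetric matrix with S_{nk} = (1/2)(2n+1)^{1/2}(2k+1)^{1/2} for n > k, S_{nn} = 0, and S_{nk} = −(1/2)(2n+1)^{1/2}(2k+1)^{1/2} for n < k. -/

import Mathlib

open Matrix

lemma key (a b : ℝ) (_ha : 0 ≤ a) (_hb : 0 ≤ b) :
    Real.sqrt (a + 1/2) * Real.sqrt (b + 1/2)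
      = 1/2 * (Real.sqrt (2*a+1) * Real.sqrt (2*b+1)) := by
  have h1 : (2*a+1 : ℝ) = 2 * (a + 1/2) := by ring
  have h2 : (2*b+1 : ℝ) = 2 * (b + 1/2) := by ring
  rw [h1, h2, Real.sqrt_mul (by norm_num), Real.sqrt_mul (by norm_num)]
  have hs : Real.sqrt 2 * Real.sqrt 2 = 2 := Real.mul_self_sqrt (by norm_num)
  linear_combination (-(1/2) * Real.sqrt (a+1/2) * Real.sqrt (b+1/2)) * hs

/-- The HiPPO-LegS matrix decomposes as `A = -(1/2)I - S - p pᵀ` with `S`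
real skew-symmetric and `p_n = √(n + 1/2)`. -/
theorem stmt_11 (N : ℕ)
    (A : Matrix (Fin N) (Fin N) ℝ)
    (hA : A = Matrix.of fun n k : Fin N =>
      if (k : ℕ) < (n : ℕ) then
        -(Real.sqrt (2 * (n : ℝ) + 1) * Real.sqrt (2 * (k : ℝ) + 1))
      else if n = k then -((n : ℝ) + 1) else 0)
    (S : Matrix (Fin N) (Fin N) ℝ)
    (hS : S = Matrix.of fun n k : Fin N =>
      if (k : ℕ) < (n : ℕ) then
        (1/2) * (Real.sqrt (2 * (n : ℝ) + 1) * Real.sqrt (2 * (k : ℝ) + 1))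
      else if n = k then 0
      else -((1/2) * (Real.sqrt (2 * (n : ℝ) + 1) * Real.sqrt (2 * (k : ℝ) + 1))))
    (p : Fin N → ℝ) (hp : p = fun n : Fin N => Real.sqrt ((n : ℝ) + 1/2)) :
    Sᵀ = -S ∧
    A = (-(1/2) : ℝ) • (1 : Matrix (Fin N) (Fin N) ℝ) - S - Matrix.vecMulVec p p := by
  subst hA hS hp
  constructor
  · ext n k
    simp only [transpose_apply, Matrix.neg_apply, of_apply]
    rcases lt_trichotomy (k : ℕ) (n : ℕ) with h | h | h
    · have hne : k ≠ n := fun he => by subst he; exact lt_irrefl _ h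
      rw [if_neg (lt_asymm h), if_neg hne, if_pos h]
      ring
    · have he : n = k := Fin.ext h.symm
      subst he
      simp
    · have hne : k ≠ n := fun he => by subst he; exact lt_irrefl _ h
      rw [if_pos h, if_neg (lt_asymm h), if_neg hne.symm]
      ring
  · ext n k
    have hk := key (n : ℝ) (k : ℝ) (Nat.cast_nonneg _) (Nat.cast_nonneg _)
    simp only [of_apply, Matrix.sub_apply, Matrix.smul_apply, one_apply, vecMulVec_apply, smul_eq_mul]
    rcases lt_trichotomy (k : ℕ) (n : ℕ) with h | h | h
    · have hne : n ≠ k := fun he => by subst he; exact lt_irrefl _ h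
      rw [if_pos h, if_pos h, if_neg hne, hk]
      ring
    · have he : n = k := Fin.ext h.symm
      subst he
      simp only [lt_self_iff_false, if_false, eq_self_iff_true, if_true]
      rw [Real.mul_self_sqrt (by positivity)]
      ring
    · have hne : n ≠ k := fun he => by subst he; exact lt_irrefl _ h
      have h1 : ¬ (k:ℕ) < (n:ℕ) := lt_asymm h
      simp only [h1, hne, if_false]
      rw [hk]; ring
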